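/- Let X be a real Hilbert space, w ∈ X, l > 0, and define θ : X → ℝ by θ(v) = 2l − (w, v)_X; set K = {v ∈ X : θ(v) ≥ 0} and K''' = {v ∈ X : θ(v) = 2l}. Let A : X → X satisfy (Au − Av, u − v)_X ≥ m‖u − v‖_X² and ‖Au − Av‖_X ≤ M‖u − v‖_X for all u, v ∈ X, with m, M > 0. Let p : ℝ → ℝ be Lipschitz with constant L_p > 0 and assume m > L_p‖w‖_X²; define j(u, v) = −p(θ(u)) θ(v). Let q : ℝ → ℝ be Lipschitz continuous, satisfy (q(r₁) − q(r₂))(r₁ − r₂) ≤ 0 for all r₁, r₂ ∈ ℝ, q(r) ≥ 0 for r ≤ 2l, q(r) ≤ 0 for r ≥ 2l, and q(r) = 0 if and only if r = 2l; define G : X → X by Gu = q(θ(u)) w. Let f ∈ X and let {λ_n} be positive reals with λ_n → 0. Then for each n there exists a unique u_n ∈ K with (Au_n, v − u_n)_X + (1/λ_n)(Gu_n, v − u_n)_X + j(u_n, v) − j(u_n, u_n) ≥ (f, v − u_n)_X for all v ∈ K, there exists a unique u''' ∈ K''' with (Au''', v − u''')_X + j(u''', v) − j(u''', u''') ≥ (f,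 v − u''')_X for all v ∈ K''', and u_n → u''' strongly in X as n → ∞. -/

import Mathlib

open scoped InnerProductSpace
open Filter

theorem lions_stampacchia {X : Type*} [NormedAddCommGroup X] [InnerProductSpace ℝ X]
    [CompleteSpace X]
    (K : Set X) (hne : K.Nonempty) (hcl : IsClosed K) (hconv : Convex ℝ K)
    (B : X → X) (c C : ℝ) (hc : 0 < c) (hC : 0 < C)
    (hmono : ∀ u v, c * ‖u - v‖ ^ 2 ≤ ⟪B u - B v, u - v⟫_ℝ)
    (hlip : ∀ u v, ‖B u - B v‖ ≤ C * ‖u - v‖)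
    (f : X) :
    ∃! u, u ∈ K ∧ ∀ v ∈ K, ⟪B u - f, v - u⟫_ℝ ≥ 0 := by
  have hcomplete : IsComplete K := hcl.isComplete
  -- projection
  have proj : ∀ x : X, ∃ y, y ∈ K ∧ ∀ z ∈ K, ⟪x - y, z - y⟫_ℝ ≤ 0 := by
    intro x
    obtain ⟨y, hy, hmin⟩ := exists_norm_eq_iInf_of_complete_convex hne hcomplete hconv x
    exact ⟨y, hy, fun z hz => ((norm_eq_iInf_iff_real_inner_le_zero hconv hy).1 hmin) z hz⟩
  choose P hPmem hPchar using proj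
  have hPnon : ∀ a b : X, ‖P a - P b‖ ≤ ‖a - b‖ := by
    intro a b
    have h1 := hPchar a (P b) (hPmem b)
    have h2 := hPchar b (P a) (hPmem a)
    have key : ‖P a - P b‖ ^ 2 ≤ ⟪a - b, P a - P b⟫_ℝ := by
      have e1 : a - P a = (a - b) + (b - P b) + (P b - P a) := by abel
      have e2 : ⟪a - P a, P b - P a⟫_ℝ
          = ⟪a - b, P b - P a⟫_ℝ + ⟪b - P b, P b - P a⟫_ℝ + ⟪P b - P a, P b - P a⟫_ℝ := by
        rw [e1, inner_add_left, inner_add_left]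
      have e3 : ⟪b - P b, P b - P a⟫_ℝ = -⟪b - P b, P a - P b⟫_ℝ := by
        rw [← inner_neg_right, neg_sub]
      have e4 : ⟪P b - P a, P b - P a⟫_ℝ = ‖P a - P b‖ ^ 2 := by
        rw [real_inner_self_eq_norm_sq, norm_sub_rev]
      have e5 : ⟪a - b, P b - P a⟫_ℝ = -⟪a - b, P a - P b⟫_ℝ := by
        rw [← inner_neg_right, neg_sub]
      nlinarith [h1, h2]
    have hcs := real_inner_le_norm (a - b) (P a - P b)
    nlinarith [norm_nonneg (P a - P b), norm_nonneg (a - b)]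
  set ρ : ℝ := c / C ^ 2 with hρdef
  have hρ : 0 < ρ := div_pos hc (by positivity)
  have hρC : ρ * C ^ 2 = c := by rw [hρdef]; field_simp
  have hcontr : ∀ u v : X,
      ‖(u - ρ • (B u - f)) - (v - ρ • (B v - f))‖ ^ 2 ≤ (1 - c ^ 2 / C ^ 2) * ‖u - v‖ ^ 2 := by
    intro u v
    have h0 : (u - ρ • (B u - f)) - (v - ρ • (B v - f)) = (u - v) - ρ • (B u - B v) := by
      module
    rw [h0, norm_sub_sq_real, real_inner_smul_right, norm_smul, Real.norm_eq_abs,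
      abs_of_pos hρ, real_inner_comm]
    have hm := hmono u v
    have hl := hlip u v
    have hl2 : ‖B u - B v‖ ^ 2 ≤ C ^ 2 * ‖u - v‖ ^ 2 := by
      nlinarith [norm_nonneg (B u - B v), norm_nonneg (u - v)]
    have hCC : (0:ℝ) < C ^ 2 := by positivity
    have key : (1 : ℝ) - c ^ 2 / C ^ 2 = 1 - 2 * ρ * c + ρ ^ 2 * C ^ 2 := by
      rw [hρdef]; field_simp; ring
    rw [key]
    nlinarith [mul_le_mul_of_nonneg_left hm (le_of_lt hρ),
      mul_le_mul_of_nonneg_left hl2 (sq_nonneg ρ), sq_nonneg (‖u - v‖)]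
  set κ : ℝ := Real.sqrt (max (1 - c ^ 2 / C ^ 2) 0) with hκdef
  have hκnn : 0 ≤ κ := Real.sqrt_nonneg _
  have hκsq : κ ^ 2 = max (1 - c ^ 2 / C ^ 2) 0 := Real.sq_sqrt (le_max_right _ _)
  have hκlt : κ < 1 := by
    have h1 : max (1 - c ^ 2 / C ^ 2) 0 < 1 := by
      have : 0 < c ^ 2 / C ^ 2 := by positivity
      rw [max_lt_iff]
      constructor <;> linarith
    nlinarith
  haveI : CompleteSpace K := hcl.completeSpace_coe
  haveI : Nonempty K := hne.to_subtype
  set T : K → K := fun x => ⟨P ((x : X) - ρ • (B x - f)), hPmem _⟩ with hTdef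
  have hTlip : ∀ a b : K, dist (T a) (T b) ≤ κ * dist a b := by
    intro a b
    have h1 : dist (T a) (T b) = ‖P ((a : X) - ρ • (B a - f)) - P ((b : X) - ρ • (B b - f))‖ := by
      rw [Subtype.dist_eq, dist_eq_norm]
    have h2 := hPnon ((a : X) - ρ • (B a - f)) ((b : X) - ρ • (B b - f))
    have h3 := hcontr (a : X) (b : X)
    have h4 : dist a b = ‖(a : X) - b‖ := by rw [Subtype.dist_eq, dist_eq_norm]
    have h5 : (1 - c ^ 2 / C ^ 2) * ‖(a : X) - b‖ ^ 2 ≤ κ ^ 2 * ‖(a : X) - b‖ ^ 2 := by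
      have : (1 - c ^ 2 / C ^ 2) ≤ κ ^ 2 := by rw [hκsq]; exact le_max_left _ _
      nlinarith [sq_nonneg (‖(a:X) - b‖)]
    rw [h1, h4]
    nlinarith [norm_nonneg (P ((a : X) - ρ • (B a - f)) - P ((b : X) - ρ • (B b - f))),
      norm_nonneg ((a : X) - b), mul_nonneg hκnn (norm_nonneg ((a : X) - b))]
  have hcw : ContractingWith ⟨κ, hκnn⟩ T := by
    constructor
    · exact_mod_cast hκlt
    · exact LipschitzWith.of_dist_le_mul hTlip
  obtain ⟨u, hu⟩ : ∃ u : K, T u = u := ⟨hcw.fixedPoint T, hcw.fixedPoint_isFixedPt⟩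
  have huP : P ((u : X) - ρ • (B u - f)) = (u : X) := congrArg Subtype.val hu
  refine ⟨(u : X), ⟨u.2, ?_⟩, ?_⟩
  · intro v hv
    have h := hPchar ((u : X) - ρ • (B u - f)) v hv
    rw [huP] at h
    have h2 : ((u : X) - ρ • (B u - f)) - u = -(ρ • (B u - f)) := by abel
    rw [h2, inner_neg_left, real_inner_smul_left] at h
    have : 0 ≤ ρ * ⟪B u - f, v - u⟫_ℝ := by linarith
    exact le_of_mul_le_mul_left (by linarith) hρ
  · rintro y ⟨hyK, hy⟩
    have h1 := hy u u.2
    have h3 : ∀ v ∈ K, ⟪B (u : X) - f, v - u⟫_ℝ ≥ 0 := by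
      intro v hv
      have h := hPchar ((u : X) - ρ • (B u - f)) v hv
      rw [huP] at h
      have h2 : ((u : X) - ρ • (B u - f)) - u = -(ρ • (B u - f)) := by abel
      rw [h2, inner_neg_left, real_inner_smul_left] at h
      exact le_of_mul_le_mul_left (by linarith) hρ
    have h4 := h3 y hyK
    have hm := hmono y (u : X)
    have e1 : ⟪B y - B u, y - u⟫_ℝ = ⟪B y - f, y - u⟫_ℝ - ⟪B (u:X) - f, y - u⟫_ℝ := by
      rw [← inner_sub_left]; congr 1; abel
    have e2 : ⟪B y - f, y - u⟫_ℝ = -⟪B y - f, (u:X) - y⟫_ℝ := by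
      rw [← inner_neg_right, neg_sub]
    have hnorm : ‖y - (u : X)‖ ^ 2 ≤ 0 := by nlinarith [h1, h4]
    have : ‖y - (u : X)‖ = 0 := by nlinarith [norm_nonneg (y - (u : X))]
    have := norm_eq_zero.mp this
    have : y = (u : X) := by
      have := sub_eq_zero.mp this; exact this
    exact this

set_option maxHeartbeats 2000000 in
theorem spring_rods_convergence_rigid_both
    {X : Type*} [NormedAddCommGroup X] [InnerProductSpace ℝ X] [CompleteSpace X]
    (w : X) (l : ℝ) (hl : 0 < l)
    (θ : X → ℝ) (hθ : ∀ v : X, θ v = 2 * l - ⟪w, v⟫_ℝ)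
    (K K''' : Set X)
    (hK : K = {v : X | θ v ≥ 0}) (hK''' : K''' = {v : X | θ v = 2 * l})
    (A : X → X) (m M : ℝ) (hm : 0 < m) (hM : 0 < M)
    (hA_mono : ∀ u v : X, m * ‖u - v‖ ^ 2 ≤ ⟪A u - A v, u - v⟫_ℝ)
    (hA_lip : ∀ u v : X, ‖A u - A v‖ ≤ M * ‖u - v‖)
    (p : ℝ → ℝ) (Lp : ℝ) (hLp : 0 < Lp)
    (hp_lip : ∀ r s : ℝ, |p r - p s| ≤ Lp * |r - s|)
    (hsmall : Lp * ‖w‖ ^ 2 < m)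
    (j : X → X → ℝ) (hj : ∀ u v : X, j u v = -(p (θ u)) * θ v)
    (q : ℝ → ℝ)
    (hq_lip : ∃ Lq : ℝ, 0 < Lq ∧ ∀ r s : ℝ, |q r - q s| ≤ Lq * |r - s|)
    (hq_mono : ∀ r s : ℝ, (q r - q s) * (r - s) ≤ 0)
    (hq_nonneg : ∀ r : ℝ, r ≤ 2 * l → 0 ≤ q r)
    (hq_nonpos : ∀ r : ℝ, 2 * l ≤ r → q r ≤ 0)
    (hq_zero : ∀ r : ℝ, q r = 0 ↔ r = 2 * l)
    (G : X → X) (hG : ∀ u : X, G u = q (θ u) • w)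
    (f : X) (lam : ℕ → ℝ) (hlam_pos : ∀ n, 0 < lam n)
    (hlam_lim : Tendsto lam atTop (nhds 0)) :
    (∀ n : ℕ, ∃! u : X, u ∈ K ∧ ∀ v ∈ K,
      ⟪A u, v - u⟫_ℝ + (1 / lam n) * ⟪G u, v - u⟫_ℝ + j u v - j u u
        ≥ ⟪f, v - u⟫_ℝ) ∧
    (∃! u' : X, u' ∈ K''' ∧ ∀ v ∈ K''',
      ⟪A u', v - u'⟫_ℝ + j u' v - j u' u' ≥ ⟪f, v - u'⟫_ℝ) ∧
    (∀ (un : ℕ → X) (u' : X),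
      (∀ n : ℕ, un n ∈ K ∧ ∀ v ∈ K,
        ⟪A (un n), v - un n⟫_ℝ + (1 / lam n) * ⟪G (un n), v - un n⟫_ℝ
          + j (un n) v - j (un n) (un n) ≥ ⟪f, v - un n⟫_ℝ) →
      (u' ∈ K''' ∧ ∀ v ∈ K''',
        ⟪A u', v - u'⟫_ℝ + j u' v - j u' u' ≥ ⟪f, v - u'⟫_ℝ) →
      Tendsto un atTop (nhds u')) := by
  obtain ⟨Lq, hLq, hq_lipf⟩ := hq_lip
  have hq2l : q (2 * l) = 0 := (hq_zero (2 * l)).mpr rfl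
  -- generic facts
  have hwv : ∀ u v : X, ⟪w, u - v⟫_ℝ = θ v - θ u := by
    intro u v; rw [inner_sub_right, hθ u, hθ v]; ring
  have hθdiff : ∀ u v : X, |θ u - θ v| ≤ ‖w‖ * ‖u - v‖ := by
    intro u v
    have h1 : θ u - θ v = -⟪w, u - v⟫_ℝ := by rw [hwv]; ring
    rw [h1, abs_neg]
    exact abs_real_inner_le_norm w (u - v)
  have hc0 : 0 < m - Lp * ‖w‖ ^ 2 := by linarith
  have hKcl : IsClosed K := by
    rw [hK]
    have h1 : {v : X | θ v ≥ 0} = {v : X | ⟪w, v⟫_ℝ ≤ 2 * l} := by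
      ext v; simp only [Set.mem_setOf_eq, hθ]; constructor <;> intro <;> linarith
    rw [h1]
    exact isClosed_le (Continuous.inner continuous_const continuous_id) continuous_const
  have hKconv : Convex ℝ K := by
    rw [hK]
    intro x hx y hy a b ha hb hab
    simp only [Set.mem_setOf_eq, hθ, inner_add_right, real_inner_smul_right] at *
    nlinarith
  have hKne : K.Nonempty := by
    refine ⟨0, ?_⟩
    rw [hK]
    simp only [Set.mem_setOf_eq, hθ, inner_zero_right]
    linarith
  have hK'''cl : IsClosed K''' := by
    rw [hK''']
    have h1 : {v : X | θ v = 2 * l} = {v : X | ⟪w, v⟫_ℝ = 0} := by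
      ext v; simp only [Set.mem_setOf_eq, hθ]; constructor <;> intro <;> linarith
    rw [h1]
    exact isClosed_eq (Continuous.inner continuous_const continuous_id) continuous_const
  have hK'''conv : Convex ℝ K''' := by
    rw [hK''']
    intro x hx y hy a b ha hb hab
    simp only [Set.mem_setOf_eq, hθ, inner_add_right, real_inner_smul_right] at *
    nlinarith
  have hK'''ne : K'''.Nonempty := by
    refine ⟨0, ?_⟩
    rw [hK''']
    simp only [Set.mem_setOf_eq, hθ, inner_zero_right]
    ring
  -- Part 1
  have part1 : ∀ n : ℕ, ∃! u : X, u ∈ K ∧ ∀ v ∈ K,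
      ⟪A u, v - u⟫_ℝ + (1 / lam n) * ⟪G u, v - u⟫_ℝ + j u v - j u u ≥ ⟪f, v - u⟫_ℝ := by
    intro n
    have hlamn1 := hlam_pos n
    have hlamn2 : (0:ℝ) < 1 / lam n := by positivity
    set B : X → X := fun u => A u + ((1 / lam n) * q (θ u) + p (θ u)) • w with hB
    have hBdiff : ∀ u v : X, B u - B v
        = (A u - A v) + (((1 / lam n) * q (θ u) + p (θ u))
          - ((1 / lam n) * q (θ v) + p (θ v))) • w := by
      intro u v; simp only [hB]; module
    have hmonoB : ∀ u v, (m - Lp * ‖w‖ ^ 2) * ‖u - v‖ ^ 2 ≤ ⟪B u - B v, u - v⟫_ℝ := by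
      intro u v
      rw [hBdiff, inner_add_left, real_inner_smul_left, hwv u v]
      have hq1 : (q (θ u) - q (θ v)) * (θ u - θ v) ≤ 0 := hq_mono _ _
      have hp1 : |p (θ u) - p (θ v)| ≤ Lp * |θ u - θ v| := hp_lip _ _
      have hθles := hθdiff u v
      have hp2 : (p (θ u) - p (θ v)) * (θ u - θ v) ≤ Lp * (‖w‖ * ‖u - v‖) ^ 2 := by
        have h1 : (p (θ u) - p (θ v)) * (θ u - θ v) ≤ |p (θ u) - p (θ v)| * |θ u - θ v| := by
          calc (p (θ u) - p (θ v)) * (θ u - θ v)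
              ≤ |(p (θ u) - p (θ v)) * (θ u - θ v)| := le_abs_self _
            _ = |p (θ u) - p (θ v)| * |θ u - θ v| := abs_mul _ _
        have h2 : |p (θ u) - p (θ v)| * |θ u - θ v| ≤ (Lp * |θ u - θ v|) * |θ u - θ v| :=
          mul_le_mul_of_nonneg_right hp1 (abs_nonneg _)
        have h3 : |θ u - θ v| * |θ u - θ v| ≤ (‖w‖ * ‖u - v‖) * (‖w‖ * ‖u - v‖) :=
          mul_self_le_mul_self (abs_nonneg _) hθles
        nlinarith [mul_le_mul_of_nonneg_left h3 (le_of_lt hLp)]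
      have hmA := hA_mono u v
      nlinarith [mul_le_mul_of_nonneg_left hq1 (le_of_lt hlamn2), sq_nonneg (‖w‖ * ‖u - v‖)]
    have hlipB : ∀ u v, ‖B u - B v‖ ≤ (M + ((1 / lam n) * Lq + Lp) * ‖w‖ ^ 2) * ‖u - v‖ := by
      intro u v
      rw [hBdiff]
      have h1 : ‖(A u - A v) + (((1 / lam n) * q (θ u) + p (θ u))
          - ((1 / lam n) * q (θ v) + p (θ v))) • w‖
          ≤ ‖A u - A v‖ + |((1 / lam n) * q (θ u) + p (θ u))
            - ((1 / lam n) * q (θ v) + p (θ v))| * ‖w‖ := by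
        refine (norm_add_le _ _).trans ?_
        rw [norm_smul, Real.norm_eq_abs]
      have h2 : |((1 / lam n) * q (θ u) + p (θ u)) - ((1 / lam n) * q (θ v) + p (θ v))|
          ≤ (1 / lam n) * |q (θ u) - q (θ v)| + |p (θ u) - p (θ v)| := by
        have e : ((1 / lam n) * q (θ u) + p (θ u)) - ((1 / lam n) * q (θ v) + p (θ v))
            = (1 / lam n) * (q (θ u) - q (θ v)) + (p (θ u) - p (θ v)) := by ring
        rw [e]
        refine (abs_add_le _ _).trans ?_
        rw [abs_mul, abs_of_pos hlamn2]
      have h3 : |q (θ u) - q (θ v)| ≤ Lq * |θ u - θ v| := hq_lipf _ _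
      have h4 : |p (θ u) - p (θ v)| ≤ Lp * |θ u - θ v| := hp_lip _ _
      have h5 := hθdiff u v
      have h6 := hA_lip u v
      have h7 : (0:ℝ) ≤ ‖w‖ := norm_nonneg w
      have h8 : (0:ℝ) ≤ |θ u - θ v| := abs_nonneg _
      have hq5 : |q (θ u) - q (θ v)| ≤ Lq * (‖w‖ * ‖u - v‖) :=
        h3.trans (mul_le_mul_of_nonneg_left h5 (le_of_lt hLq))
      have hp5 : |p (θ u) - p (θ v)| ≤ Lp * (‖w‖ * ‖u - v‖) :=
        h4.trans (mul_le_mul_of_nonneg_left h5 (le_of_lt hLp))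
      have h9 : |1 / lam n * q (θ u) + p (θ u) - (1 / lam n * q (θ v) + p (θ v))|
          ≤ (1 / lam n * Lq + Lp) * (‖w‖ * ‖u - v‖) := by
        refine h2.trans ?_
        have h10 := mul_le_mul_of_nonneg_left hq5 (le_of_lt hlamn2)
        nlinarith
      have h11 := mul_le_mul_of_nonneg_right h9 h7
      refine h1.trans ?_
      nlinarith [h6]
    have hCpos : 0 < M + ((1 / lam n) * Lq + Lp) * ‖w‖ ^ 2 := by
      have : (0:ℝ) ≤ ((1 / lam n) * Lq + Lp) * ‖w‖ ^ 2 := by positivity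
      linarith
    have hLS := lions_stampacchia K hKne hKcl hKconv B (m - Lp * ‖w‖ ^ 2)
      (M + ((1 / lam n) * Lq + Lp) * ‖w‖ ^ 2) hc0 hCpos hmonoB hlipB f
    have hident : ∀ u v : X, ⟪B u - f, v - u⟫_ℝ
        = ⟪A u, v - u⟫_ℝ + (1 / lam n) * ⟪G u, v - u⟫_ℝ + j u v - j u u - ⟪f, v - u⟫_ℝ := by
      intro u v
      have h1 : ⟪w, v - u⟫_ℝ = θ u - θ v := hwv v u
      have h2 : ⟪G u, v - u⟫_ℝ = q (θ u) * (θ u - θ v) := by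
        rw [hG, real_inner_smul_left, h1]
      have h3 : ⟪B u - f, v - u⟫_ℝ = ⟪A u, v - u⟫_ℝ
          + ((1 / lam n) * q (θ u) + p (θ u)) * (θ u - θ v) - ⟪f, v - u⟫_ℝ := by
        simp only [hB]
        rw [inner_sub_left, inner_add_left, real_inner_smul_left, h1]
      rw [h3, h2, hj, hj]; ring
    refine (existsUnique_congr fun u => ?_).mp hLS
    refine and_congr_right fun hu => forall₂_congr fun v hv => ?_
    have := hident u v
    constructor <;> intro h <;> linarith
  -- Part 2
  have part2 : ∃! u' : X, u' ∈ K''' ∧ ∀ v ∈ K''',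
      ⟪A u', v - u'⟫_ℝ + j u' v - j u' u' ≥ ⟪f, v - u'⟫_ℝ := by
    have hLS := lions_stampacchia K''' hK'''ne hK'''cl hK'''conv A m M hm hM hA_mono hA_lip f
    refine (existsUnique_congr fun u => ?_).mp hLS
    refine and_congr_right fun hu => forall₂_congr fun v hv => ?_
    have hu2 : θ u = 2 * l := by rw [hK'''] at hu; exact hu
    have hv2 : θ v = 2 * l := by rw [hK'''] at hv; exact hv
    have hjv : j u v - j u u = 0 := by rw [hj, hj, hu2, hv2]; ring
    rw [inner_sub_left]
    constructor <;> intro h <;> linarith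
  refine ⟨part1, part2, ?_⟩
  -- Part 3 : convergence
  intro un u' hun hu'
  obtain ⟨hu'K''', hu'VI⟩ := hu'
  have hθu' : θ u' = 2 * l := by rw [hK'''] at hu'K'''; exact hu'K'''
  have hwu' : ⟪w, u'⟫_ℝ = 0 := by have := hθ u'; linarith
  obtain ⟨z, hz⟩ : ∃ z : X, z = A u' - f := ⟨_, rfl⟩
  -- z is orthogonal to the hyperplane, hence a multiple of w
  have hzperp : ∀ y : X, ⟪w, y⟫_ℝ = 0 → ⟪z, y⟫_ℝ = 0 := by
    intro y hy
    have hmem : ∀ t : ℝ, u' + t • y ∈ K''' := by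
      intro t
      rw [hK''']
      show θ (u' + t • y) = 2 * l
      rw [hθ, inner_add_right, real_inner_smul_right, hy, hwu']; ring
    have key : ∀ v ∈ K''', ⟪z, v - u'⟫_ℝ ≥ 0 := by
      intro v hv
      have h := hu'VI v hv
      have hv2 : θ v = 2 * l := by rw [hK'''] at hv; exact hv
      have hjv : j u' v - j u' u' = 0 := by rw [hj, hj, hv2, hθu']; ring
      rw [hz, inner_sub_left]
      linarith
    have h1 := key (u' + (1:ℝ) • y) (hmem 1)
    have h2 := key (u' + (-1:ℝ) • y) (hmem (-1))
    have e1 : u' + (1:ℝ) • y - u' = y := by module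
    have e2 : u' + (-1:ℝ) • y - u' = -y := by module
    rw [e1] at h1
    rw [e2, inner_neg_right] at h2
    linarith
  obtain ⟨α, hα⟩ : ∃ α : ℝ, α = ⟪w, z⟫_ℝ / ‖w‖ ^ 2 := ⟨_, rfl⟩
  have hzαw : z = α • w := by
    obtain ⟨y₀, hy₀⟩ : ∃ y₀ : X, y₀ = z - α • w := ⟨_, rfl⟩
    have hwy₀ : ⟪w, y₀⟫_ℝ = 0 := by
      rw [hy₀, inner_sub_right, real_inner_smul_right, real_inner_self_eq_norm_sq]
      rcases eq_or_ne w 0 with h | h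
      · simp [h]
      · rw [hα]
        have : ‖w‖ ≠ 0 := norm_ne_zero_iff.mpr h
        field_simp
        ring
    have h1 : ⟪z, y₀⟫_ℝ = 0 := hzperp y₀ hwy₀
    have h2 : ⟪α • w, y₀⟫_ℝ = 0 := by rw [real_inner_smul_left, hwy₀, mul_zero]
    rw [hy₀] at h1 h2
    have h3 : ⟪z - α • w, z - α • w⟫_ℝ = 0 := by rw [inner_sub_left, h1, h2, sub_zero]
    exact sub_eq_zero.mp (inner_self_eq_zero.mp h3)
  have hu'K : u' ∈ K := by rw [hK]; show θ u' ≥ 0; rw [hθu']; linarith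
  obtain ⟨d, hd⟩ : ∃ d : ℕ → ℝ, ∀ n, d n = θ (un n) - 2 * l := ⟨_, fun _ => rfl⟩
  obtain ⟨g, hg⟩ : ∃ g : ℕ → ℝ, ∀ n, g n = -(q (θ (un n)) * d n) := ⟨_, fun _ => rfl⟩
  -- the key variational inequality tested with u'
  have hkey : ∀ n, ⟪A (un n) - f, u' - un n⟫_ℝ
      + (1 / lam n) * (q (θ (un n)) * d n) + p (θ (un n)) * d n ≥ 0 := by
    intro n
    obtain ⟨hunK, hunVI⟩ := hun n
    have hVIn := hunVI u' hu'K
    have hwun : ⟪w, u' - un n⟫_ℝ = d n := by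
      rw [inner_sub_right, hwu', hd n]
      have := hθ (un n)
      linarith
    have hGn : ⟪G (un n), u' - un n⟫_ℝ = q (θ (un n)) * d n := by
      rw [hG, real_inner_smul_left, hwun]
    have hjn : j (un n) u' - j (un n) (un n) = p (θ (un n)) * d n := by
      rw [hj, hj, hθu', hd n]
      ring
    rw [inner_sub_left]
    rw [hGn] at hVIn
    linarith [hjn]
  have hqd_nonpos : ∀ n, q (θ (un n)) * d n ≤ 0 := by
    intro n
    have h1 := hq_mono (θ (un n)) (2 * l)
    rw [hq2l] at h1
    rw [hd n]
    simpa using h1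
  have hgnonneg : ∀ n, 0 ≤ g n := by
    intro n
    have := hqd_nonpos n
    rw [hg n]
    linarith
  have hdabs : ∀ n, |d n| ≤ ‖w‖ * ‖un n - u'‖ := by
    intro n
    have := hθdiff (un n) u'
    rw [hθu'] at this
    rw [hd n]
    exact this
  -- the main quadratic estimate
  have hmain : ∀ n, (m - Lp * ‖w‖ ^ 2) * ‖un n - u'‖ ^ 2 ≤ (p (2 * l) + α) * d n := by
    intro n
    have hmono := hA_mono (un n) u'
    have hkeyn := hkey n
    have e1 : ⟪A (un n) - A u', un n - u'⟫_ℝ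
        = -⟪A (un n) - f, u' - un n⟫_ℝ - ⟪z, un n - u'⟫_ℝ := by
      rw [hz]
      have e : A (un n) - A u' = (A (un n) - f) - (A u' - f) := by abel
      rw [e, inner_sub_left]
      have e' : ⟪A (un n) - f, un n - u'⟫_ℝ = -⟪A (un n) - f, u' - un n⟫_ℝ := by
        rw [← inner_neg_right, neg_sub]
      rw [e']
    have e2 : ⟪z, un n - u'⟫_ℝ = -(α * d n) := by
      rw [hzαw, real_inner_smul_left]
      have hwun : ⟪w, un n - u'⟫_ℝ = -(d n) := by
        rw [inner_sub_right, hwu', hd n]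
        have := hθ (un n)
        linarith
      rw [hwun]
      ring
    have hqdn := hqd_nonpos n
    have hlamn2 : (0:ℝ) < 1 / lam n := div_pos one_pos (hlam_pos n)
    have h0 : (1 / lam n) * (q (θ (un n)) * d n) ≤ 0 := by
      nlinarith [hqdn, hlamn2]
    have h3 : ⟪A (un n) - A u', un n - u'⟫_ℝ ≤ p (θ (un n)) * d n + α * d n := by
      rw [e1, e2]
      linarith [hkeyn, h0]
    have h4 : (p (θ (un n)) - p (2 * l)) * d n ≤ Lp * (‖w‖ * ‖un n - u'‖) ^ 2 := by
      have ha : |p (θ (un n)) - p (2 * l)| ≤ Lp * |d n| := by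
        have := hp_lip (θ (un n)) (2 * l)
        rw [hd n]
        exact this
      have hb : |d n| ≤ ‖w‖ * ‖un n - u'‖ := hdabs n
      have hc : (p (θ (un n)) - p (2 * l)) * d n ≤ |p (θ (un n)) - p (2 * l)| * |d n| := by
        calc (p (θ (un n)) - p (2 * l)) * d n
            ≤ |(p (θ (un n)) - p (2 * l)) * d n| := le_abs_self _
          _ = |p (θ (un n)) - p (2 * l)| * |d n| := abs_mul _ _
      have he : |d n| * |d n| ≤ (‖w‖ * ‖un n - u'‖) * (‖w‖ * ‖un n - u'‖) :=
        mul_self_le_mul_self (abs_nonneg _) hb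
      nlinarith [mul_le_mul_of_nonneg_left he (le_of_lt hLp), abs_nonneg (d n)]
    nlinarith [hmono]
  -- boundedness
  obtain ⟨R, hR⟩ : ∃ R : ℝ, R = |p (2 * l) + α| * ‖w‖ / (m - Lp * ‖w‖ ^ 2) := ⟨_, rfl⟩
  have hRnn : 0 ≤ R := by rw [hR]; positivity
  have hbound : ∀ n, ‖un n - u'‖ ≤ R := by
    intro n
    have h1 := hmain n
    have h2 : (p (2 * l) + α) * d n ≤ |p (2 * l) + α| * (‖w‖ * ‖un n - u'‖) := by
      calc (p (2 * l) + α) * d n ≤ |(p (2 * l) + α) * d n| := le_abs_self _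
        _ = |p (2 * l) + α| * |d n| := abs_mul _ _
        _ ≤ |p (2 * l) + α| * (‖w‖ * ‖un n - u'‖) :=
            mul_le_mul_of_nonneg_left (hdabs n) (abs_nonneg _)
    rcases eq_or_lt_of_le (norm_nonneg (un n - u')) with h | h
    · rw [← h]; exact hRnn
    · rw [hR, le_div_iff₀ hc0]
      nlinarith
  have hdbound : ∀ n, |d n| ≤ ‖w‖ * R := fun n =>
    (hdabs n).trans (mul_le_mul_of_nonneg_left (hbound n) (norm_nonneg w))
  have hpbound : ∀ n, |p (θ (un n))| ≤ |p (2 * l)| + Lp * (‖w‖ * R) := by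
    intro n
    have h1 : |p (θ (un n)) - p (2 * l)| ≤ Lp * |d n| := by
      have := hp_lip (θ (un n)) (2 * l)
      rw [hd n]
      exact this
    have h2 := abs_sub_abs_le_abs_sub (p (θ (un n))) (p (2 * l))
    have h3 := mul_le_mul_of_nonneg_left (hdbound n) (le_of_lt hLp)
    linarith
  have hXbound : ∀ n, |⟪A (un n) - f, u' - un n⟫_ℝ| ≤ (‖z‖ + M * R) * R := by
    intro n
    have h1 : |⟪A (un n) - f, u' - un n⟫_ℝ| ≤ ‖A (un n) - f‖ * ‖u' - un n‖ :=
      abs_real_inner_le_norm _ _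
    have h2 : ‖A (un n) - f‖ ≤ ‖z‖ + M * R := by
      have e : A (un n) - f = (A (un n) - A u') + z := by rw [hz]; abel
      rw [e]
      refine (norm_add_le _ _).trans ?_
      have := (hA_lip (un n) u').trans (mul_le_mul_of_nonneg_left (hbound n) (le_of_lt hM))
      linarith
    have h3 : ‖u' - un n‖ ≤ R := by rw [norm_sub_rev]; exact hbound n
    calc |⟪A (un n) - f, u' - un n⟫_ℝ| ≤ ‖A (un n) - f‖ * ‖u' - un n‖ := h1
      _ ≤ (‖z‖ + M * R) * R := by
          refine mul_le_mul h2 h3 (norm_nonneg _) ?_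
          positivity
  obtain ⟨C3, hC3⟩ : ∃ C3 : ℝ,
      C3 = (‖z‖ + M * R) * R + (|p (2 * l)| + Lp * (‖w‖ * R)) * (‖w‖ * R) := ⟨_, rfl⟩
  have hgbound : ∀ n, g n ≤ lam n * C3 := by
    intro n
    have hlamn1 := hlam_pos n
    have hkeyn := hkey n
    -- g n ≤ lam n * (X_n + p*d)
    have h1 : g n ≤ lam n * (⟪A (un n) - f, u' - un n⟫_ℝ + p (θ (un n)) * d n) := by
      have h2 : (1 / lam n) * g n ≤ ⟪A (un n) - f, u' - un n⟫_ℝ + p (θ (un n)) * d n := by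
        rw [hg n]
        nlinarith
      have h3 := mul_le_mul_of_nonneg_left h2 (le_of_lt hlamn1)
      rw [← mul_assoc] at h3
      have h4 : lam n * (1 / lam n) = 1 := by field_simp
      rw [h4, one_mul] at h3
      exact h3
    refine h1.trans ?_
    refine mul_le_mul_of_nonneg_left ?_ (le_of_lt hlamn1)
    have h5 : p (θ (un n)) * d n ≤ |p (θ (un n))| * |d n| := by
      calc p (θ (un n)) * d n ≤ |p (θ (un n)) * d n| := le_abs_self _
        _ = |p (θ (un n))| * |d n| := abs_mul _ _
    have h6 : |p (θ (un n))| * |d n| ≤ (|p (2 * l)| + Lp * (‖w‖ * R)) * (‖w‖ * R) := by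
      refine mul_le_mul (hpbound n) (hdbound n) (abs_nonneg _) ?_
      positivity
    have h7 := le_abs_self (⟪A (un n) - f, u' - un n⟫_ℝ)
    have h8 := hXbound n
    rw [hC3]
    linarith
  have hgtends : Tendsto g atTop (nhds 0) := by
    refine squeeze_zero hgnonneg hgbound ?_
    have := hlam_lim.mul_const C3
    simpa using this
  -- d tends to zero
  have hdtends : Tendsto d atTop (nhds 0) := by
    rw [Metric.tendsto_atTop]
    intro ε hε
    have hq1 : 0 < q (2 * l - ε) := by
      rcases lt_or_eq_of_le (hq_nonneg (2 * l - ε) (by linarith)) with h | h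
      · exact h
      · exfalso
        have := (hq_zero (2 * l - ε)).mp h.symm
        linarith
    have hq2 : q (2 * l + ε) < 0 := by
      rcases lt_or_eq_of_le (hq_nonpos (2 * l + ε) (by linarith)) with h | h
      · exact h
      · exfalso
        have := (hq_zero (2 * l + ε)).mp h
        linarith
    obtain ⟨δ, hδ⟩ : ∃ δ : ℝ, δ = ε * min (q (2 * l - ε)) (-q (2 * l + ε)) := ⟨_, rfl⟩
    have hδpos : 0 < δ := by
      rw [hδ]
      refine mul_pos hε ?_
      rw [lt_min_iff]
      constructor <;> linarith
    obtain ⟨N, hN⟩ := (Metric.tendsto_atTop.mp hgtends) δ hδpos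
    refine ⟨N, fun n hn => ?_⟩
    have hgn : g n < δ := by
      have := hN n hn
      rw [Real.dist_eq, sub_zero, abs_of_nonneg (hgnonneg n)] at this
      exact this
    rw [Real.dist_eq, sub_zero]
    by_contra hcon
    push_neg at hcon
    rcases le_abs.mp hcon with hcase | hcase
    · -- ε ≤ d n, i.e. θ (un n) ≥ 2l + ε
      have hr : 2 * l + ε ≤ θ (un n) := by
        have := hd n
        linarith
      have hqr : q (θ (un n)) ≤ 0 := hq_nonpos _ (by linarith)
      have hmono2 := hq_mono (θ (un n)) (2 * l + ε)
      rcases le_or_gt (q (θ (un n))) (q (2 * l + ε)) with hcmp | hcmp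
      · have h1 : g n ≥ (-q (2 * l + ε)) * ε := by
          simp only [hg, hd]
          nlinarith
        have h2 : δ ≤ ε * (-q (2 * l + ε)) := by
          rw [hδ]
          exact mul_le_mul_of_nonneg_left (min_le_right _ _) (le_of_lt hε)
        nlinarith
      · have hreq : θ (un n) ≤ 2 * l + ε := by nlinarith
        have : θ (un n) = 2 * l + ε := le_antisymm hreq hr
        rw [this] at hcmp
        exact absurd hcmp (lt_irrefl _)
    · -- ε ≤ -d n, i.e. θ (un n) ≤ 2l - ε
      have hr : θ (un n) ≤ 2 * l - ε := by
        have := hd n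
        linarith
      have hqr : 0 ≤ q (θ (un n)) := hq_nonneg _ (by linarith)
      have hmono2 := hq_mono (θ (un n)) (2 * l - ε)
      rcases le_or_gt (q (2 * l - ε)) (q (θ (un n))) with hcmp | hcmp
      · have h1 : g n ≥ q (2 * l - ε) * ε := by
          simp only [hg, hd]
          nlinarith
        have h2 : δ ≤ ε * q (2 * l - ε) := by
          rw [hδ]
          exact mul_le_mul_of_nonneg_left (min_le_left _ _) (le_of_lt hε)
        nlinarith
      · have hreq : 2 * l - ε ≤ θ (un n) := by nlinarith
        have : θ (un n) = 2 * l - ε := le_antisymm hr hreq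
        rw [this] at hcmp
        exact absurd hcmp (lt_irrefl _)
  -- conclusion
  have hsq : Tendsto (fun n => ‖un n - u'‖ ^ 2) atTop (nhds 0) := by
    refine squeeze_zero (g := fun n => (p (2 * l) + α) * d n / (m - Lp * ‖w‖ ^ 2))
      (fun n => sq_nonneg _) (fun n => ?_) ?_
    · show ‖un n - u'‖ ^ 2 ≤ (p (2 * l) + α) * d n / (m - Lp * ‖w‖ ^ 2)
      rw [le_div_iff₀ hc0]
      have := hmain n
      nlinarith
    · have h1 := (hdtends.const_mul (p (2 * l) + α)).div_const (m - Lp * ‖w‖ ^ 2)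
      simpa using h1
  have hnorm : Tendsto (fun n => ‖un n - u'‖) atTop (nhds 0) := by
    have h1 := (Real.continuous_sqrt.tendsto 0).comp hsq
    have h2 : (fun n => Real.sqrt (‖un n - u'‖ ^ 2)) = fun n => ‖un n - u'‖ :=
      funext fun n => Real.sqrt_sq (norm_nonneg _)
    rw [Real.sqrt_zero] at h1
    rwa [← h2]
  rw [tendsto_iff_norm_sub_tendsto_zero]
  exact hnorm
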